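/- For integers s, t ≥ 0 and n > s + t, the weighted sums satisfy the recursion W^A_{s,t}(n) = Σ_{i=0}^{s} binom(n−2, i) · τ^A_{s−i,t}(n−i). -/

import Mathlib

open scoped Classical

noncomputable section

/-- `[r]_q = 1 + q + ... + q^(r-1)`, with `[0]_q = 0`. -/
def qa (q : ℝ) (r : ℕ) : ℝ := ∑ m ∈ Finset.range r, q ^ m

/-- The factor contributed by an element `a` of the first row that is linked to `b`
when the set of available elements of the second row is `D`: if `b` is the `m`-th
element of `D` in increasing order of cyclic distance `(· - a) mod k`
(the ring `Z_k` being identified with `{1, …, k}`) and `r = |D|`, the factor is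
`q^(m-1) / [r]_q`. -/
def stepW (q : ℝ) (k a : ℕ) (D : Finset ℕ) (b : ℕ) : ℝ :=
  q ^ ((D.filter fun c => (c + k - a) % k < (b + k - a) % k).card) / qa q D.card

/-- Product of the factors obtained by processing the elements of the first list
in order, starting with available set `D`; each processed `a` is linked to `F a`,
which then becomes unavailable. -/
def chainW (q : ℝ) (k : ℕ) (F : ℕ → ℕ) : List ℕ → Finset ℕ → ℝ
  | [], _ => 1
  | a :: l, D => stepW q k a D (F a) * chainW q k F l (D.erase (F a))

/-- The weight `wt(A, B, F)` of a linked two-row multiline queue on `Z_k = {1,…,k}`: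
trivial links (elements of `A ∩ B`, linked to themselves) contribute a factor `1`;
the elements of `A \ B` are processed in increasing order, the initially available
elements of the second row being those of `B \ A`. -/
def mlqW (q : ℝ) (k : ℕ) (A B : Finset ℕ) (F : ℕ → ℕ) : ℝ :=
  chainW q k F ((A \ B).sort (· ≤ ·)) (B \ A)

/-- Extend an injection `f : A ↪ B` to a function `ℕ → ℕ` (identity off `A`). -/
def extendF (A B : Finset ℕ) (f : ↥A ↪ ↥B) : ℕ → ℕ :=
  fun x => if h : x ∈ A then (f ⟨x, h⟩).1 else x

/-- Sum of the weights `wt(A, B, f)` over all two-row multiline queues `(A, B)` on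
`Z_k = {1,…,k}` and all linkings `f` of `(A, B)` (injections `f : A → B` with
`f a = a` for all `a ∈ A ∩ B`) satisfying the condition `cond A B f`. -/
def mlqSum (q : ℝ) (k : ℕ)
    (cond : Finset ℕ → Finset ℕ → (ℕ → ℕ) → Prop) : ℝ :=
  ∑ A ∈ (Finset.Icc 1 k).powerset, ∑ B ∈ (Finset.Icc 1 k).powerset,
    ∑ f : (↥A ↪ ↥B),
      if (∀ a ∈ A ∩ B, extendF A B f a = a) ∧ cond A B (extendF A B f)
      then mlqW q k A B (extendF A B f) else 0

/-- `η_{s,t}(k)`: the total weight of linked two-row multiline queues of type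
`(s, t, k-s-t)` on `Z_k` with disjoint rows whose projected word begins with `2`
(i.e. `1 ∈ B \ f(A)`). -/
def eta (q : ℝ) (s t k : ℕ) : ℝ :=
  mlqSum q k fun A B F =>
    A ∩ B = ∅ ∧ A.card = s ∧ B.card = s + t ∧ 1 ∈ B ∧ 1 ∉ A.image F

/-- `W^A_{s,t}(n)`: total weight of linked MLQs of type `(s,t,n-s-t)` with
`1 ∉ A`, `2 ∉ A`, `1 ∉ B`, `2 ∈ B`, `2 ∉ f(A)` (projected word begins with `3,2`). -/
def WA (q : ℝ) (s t n : ℕ) : ℝ :=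
  mlqSum q n fun A B F =>
    A.card = s ∧ B.card = s + t ∧ 1 ∉ A ∧ 2 ∉ A ∧ 1 ∉ B ∧ 2 ∈ B ∧ 2 ∉ A.image F

/-- `τ^A_{s,t}(n)`: as `W^A_{s,t}(n)`, restricted to `A ∩ B = ∅`. -/
def tauA (q : ℝ) (s t n : ℕ) : ℝ :=
  mlqSum q n fun A B F =>
    A ∩ B = ∅ ∧
    A.card = s ∧ B.card = s + t ∧ 1 ∉ A ∧ 2 ∉ A ∧ 1 ∉ B ∧ 2 ∈ B ∧ 2 ∉ A.image F

/-- `W^B_{s,t}(n)`: total weight of linked MLQs of type `(s,t,n-s-t)` with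
`1 ∈ A`, `2 ∉ A`, `1 ∉ B`, `2 ∈ B`, `2 ∉ f(A)` (projected word begins with `3,2`). -/
def WB (q : ℝ) (s t n : ℕ) : ℝ :=
  mlqSum q n fun A B F =>
    A.card = s ∧ B.card = s + t ∧ 1 ∈ A ∧ 2 ∉ A ∧ 1 ∉ B ∧ 2 ∈ B ∧ 2 ∉ A.image F

/-- `τ^B_{s,t}(n)`: as `W^B_{s,t}(n)`, restricted to `A ∩ B = ∅`. -/
def tauB (q : ℝ) (s t n : ℕ) : ℝ :=
  mlqSum q n fun A B F =>
    A ∩ B = ∅ ∧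
    A.card = s ∧ B.card = s + t ∧ 1 ∈ A ∧ 2 ∉ A ∧ 1 ∉ B ∧ 2 ∈ B ∧ 2 ∉ A.image F

/-- `W^C_{s,t}(n)`: total weight of linked MLQs of type `(s,t,n-s-t)` with
`1 ∉ A`, `2 ∉ A`, `1 ∈ B`, `2 ∉ B`, `1 ∉ f(A)` (projected word begins with `2,3`). -/
def WC (q : ℝ) (s t n : ℕ) : ℝ :=
  mlqSum q n fun A B F =>
    A.card = s ∧ B.card = s + t ∧ 1 ∉ A ∧ 2 ∉ A ∧ 1 ∈ B ∧ 2 ∉ B ∧ 1 ∉ A.image F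

/-- `W^D_{s,t}(n)`: total weight of linked MLQs of type `(s,t,n-s-t)` with
`1 ∉ A`, `2 ∈ A`, `1 ∈ B`, `2 ∉ B`, `1 ∉ f(A)` (projected word begins with `2,3`). -/
def WD (q : ℝ) (s t n : ℕ) : ℝ :=
  mlqSum q n fun A B F =>
    A.card = s ∧ B.card = s + t ∧ 1 ∉ A ∧ 2 ∈ A ∧ 1 ∈ B ∧ 2 ∉ B ∧ 1 ∉ A.image F

/-- `τ^D_{s,t}(n)`: as `W^D_{s,t}(n)`, restricted to `A ∩ B = ∅`. -/
def tauD (q : ℝ) (s t n : ℕ) : ℝ :=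
  mlqSum q n fun A B F =>
    A ∩ B = ∅ ∧
    A.card = s ∧ B.card = s + t ∧ 1 ∉ A ∧ 2 ∈ A ∧ 1 ∈ B ∧ 2 ∉ B ∧ 1 ∉ A.image F

end

open Finset

noncomputable section
/-- The `x`-th smallest element of `D` (1-indexed); junk `0` outside `[1, D.card]`. -/
def phiD (D : Finset ℕ) (x : ℕ) : ℕ :=
  if h : x - 1 < D.card then ((D.orderIsoOfFin rfl) ⟨x - 1, h⟩ : ℕ) else 0

/-- Inverse of `phiD` : 1-based rank of `y` in `D`. -/
def psiD (D : Finset ℕ) (y : ℕ) : ℕ :=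
  if h : y ∈ D then (((D.orderIsoOfFin rfl).symm ⟨y, h⟩ : Fin D.card) : ℕ) + 1 else 0

lemma phiD_mem {D : Finset ℕ} {x : ℕ} (hx : x ∈ Icc 1 D.card) : phiD D x ∈ D := by
  simp only [mem_Icc] at hx
  rw [phiD, dif_pos (by omega)]
  exact (D.orderIsoOfFin rfl ⟨x - 1, by omega⟩).2

lemma phiD_strictMonoOn {D : Finset ℕ} : StrictMonoOn (phiD D) (Icc 1 D.card) := by
  intro x hx y hy hxy
  simp only [coe_Icc, Set.mem_Icc] at hx hy
  rw [phiD, dif_pos (by omega), phiD, dif_pos (by omega)]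
  have : (⟨x - 1, by omega⟩ : Fin D.card) < ⟨y - 1, by omega⟩ := by
    simp only [Fin.lt_def]; omega
  exact_mod_cast Subtype.coe_lt_coe.mpr ((D.orderIsoOfFin rfl).strictMono this)

lemma phiD_injOn {D : Finset ℕ} : Set.InjOn (phiD D) (Icc 1 D.card) :=
  phiD_strictMonoOn.injOn

lemma phiD_monoOn {D : Finset ℕ} {x y : ℕ} (hx : x ∈ Icc 1 D.card) (hy : y ∈ Icc 1 D.card)
    (h : x ≤ y) : phiD D x ≤ phiD D y := by
  rcases eq_or_lt_of_le h with rfl | h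
  · exact le_rfl
  · exact le_of_lt (phiD_strictMonoOn (by exact_mod_cast hx) (by exact_mod_cast hy) h)

lemma psiD_phiD {D : Finset ℕ} {x : ℕ} (hx : x ∈ Icc 1 D.card) : psiD D (phiD D x) = x := by
  simp only [mem_Icc] at hx
  have hm : phiD D x ∈ D := phiD_mem (by rw [mem_Icc]; omega)
  rw [psiD, dif_pos hm]
  have : (⟨phiD D x, hm⟩ : {y // y ∈ D}) = (D.orderIsoOfFin rfl) ⟨x - 1, by omega⟩ := by
    ext; simp only [phiD]; rw [dif_pos (by omega)]
  rw [this, OrderIso.symm_apply_apply]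
  simp only [Fin.val_mk]; omega

lemma psiD_mem {D : Finset ℕ} {y : ℕ} (hy : y ∈ D) : psiD D y ∈ Icc 1 D.card := by
  rw [psiD, dif_pos hy, mem_Icc]
  have := (((D.orderIsoOfFin rfl).symm ⟨y, hy⟩ : Fin D.card)).2
  omega

lemma phiD_psiD {D : Finset ℕ} {y : ℕ} (hy : y ∈ D) : phiD D (psiD D y) = y := by
  have h2 := (((D.orderIsoOfFin rfl).symm ⟨y, hy⟩ : Fin D.card)).2
  rw [psiD, dif_pos hy, phiD, dif_pos (by simpa using h2)]
  have : (⟨((D.orderIsoOfFin rfl).symm ⟨y, hy⟩ : Fin D.card) + 1 - 1, by simpa using h2⟩ :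
      Fin D.card) = (D.orderIsoOfFin rfl).symm ⟨y, hy⟩ := by
    ext; simp
  rw [this]
  exact congrArg Subtype.val ((D.orderIsoOfFin rfl).apply_symm_apply ⟨y, hy⟩)

lemma image_phiD {D : Finset ℕ} : (Icc 1 D.card).image (phiD D) = D := by
  ext y
  simp only [mem_image]
  constructor
  · rintro ⟨x, hx, rfl⟩; exact phiD_mem hx
  · intro hy; exact ⟨psiD D y, psiD_mem hy, phiD_psiD hy⟩

lemma phiD_one {D : Finset ℕ} (h1 : 1 ∈ D) (hpos : ∀ y ∈ D, 1 ≤ y) : phiD D 1 = 1 := by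
  have hk : 1 ≤ D.card := card_pos.mpr ⟨1, h1⟩
  have hmem : phiD D 1 ∈ D := phiD_mem (by rw [mem_Icc]; omega)
  have h2 : phiD D (psiD D 1) = 1 := phiD_psiD h1
  have h3 := psiD_mem h1
  have h4 : phiD D 1 ≤ phiD D (psiD D 1) := by
    simp only [mem_Icc] at h3
    exact phiD_monoOn (by rw [mem_Icc]; omega) (by rw [mem_Icc]; omega) h3.1
  have := hpos _ hmem
  omega

lemma phiD_two {D : Finset ℕ} (h1 : 1 ∈ D) (h2 : 2 ∈ D) (hpos : ∀ y ∈ D, 1 ≤ y) :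
    phiD D 2 = 2 := by
  have hk : 2 ≤ D.card := by
    have hs : ({1, 2} : Finset ℕ) ⊆ D := by
      intro z hz; simp only [mem_insert, mem_singleton] at hz
      rcases hz with rfl | rfl <;> assumption
    calc 2 = ({1,2} : Finset ℕ).card := by decide
    _ ≤ D.card := card_le_card hs
  have hmem : phiD D 2 ∈ D := phiD_mem (by rw [mem_Icc]; omega)
  have hone : phiD D 1 = 1 := phiD_one h1 hpos
  have hne : phiD D 2 ≠ 1 := by
    rw [← hone]
    intro h
    have := phiD_injOn (by rw [coe_Icc, Set.mem_Icc]; omega)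
      (by rw [coe_Icc, Set.mem_Icc]; omega) h
    omega
  have hge : 2 ≤ phiD D 2 := by have := hpos _ hmem; omega
  have hps : phiD D (psiD D 2) = 2 := phiD_psiD h2
  have h3 := psiD_mem h2
  simp only [mem_Icc] at h3
  have hpsne : psiD D 2 ≠ 1 := by
    intro h; rw [h, hone] at hps; omega
  have hle : phiD D 2 ≤ phiD D (psiD D 2) := by
    exact phiD_monoOn (by rw [mem_Icc]; omega) (by rw [mem_Icc]; omega) (by omega)
  omega

lemma cyc_mod {k a b : ℕ} (ha1 : 1 ≤ a) (hak : a ≤ k) (hb1 : 1 ≤ b) (hbk : b ≤ k) :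
    (b + k - a) % k = if a ≤ b then b - a else b + k - a := by
  split
  · next h =>
    have e : b + k - a = (b - a) + k := by omega
    rw [e, Nat.add_mod_right, Nat.mod_eq_of_lt (by omega)]
  · next h => exact Nat.mod_eq_of_lt (by omega)

lemma cyc_compare {k n : ℕ} {φ : ℕ → ℕ} (hmono : StrictMonoOn φ (Finset.Icc 1 k))
    (hmem : ∀ x ∈ Finset.Icc 1 k, φ x ∈ Finset.Icc 1 n)
    {a b c : ℕ} (ha : a ∈ Finset.Icc 1 k) (hb : b ∈ Finset.Icc 1 k) (hc : c ∈ Finset.Icc 1 k)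
    (hba : b ≠ a) (hca : c ≠ a) :
    ((φ b + n - φ a) % n < (φ c + n - φ a) % n) ↔ ((b + k - a) % k < (c + k - a) % k) := by
  have ha' := hmem a ha; have hb' := hmem b hb; have hc' := hmem c hc
  have iab : a ≤ b ↔ φ a ≤ φ b := (hmono.le_iff_le (by exact_mod_cast ha) (by exact_mod_cast hb)).symm
  have iba : b ≤ a ↔ φ b ≤ φ a := (hmono.le_iff_le (by exact_mod_cast hb) (by exact_mod_cast ha)).symm
  have iac : a ≤ c ↔ φ a ≤ φ c := (hmono.le_iff_le (by exact_mod_cast ha) (by exact_mod_cast hc)).symm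
  have ica : c ≤ a ↔ φ c ≤ φ a := (hmono.le_iff_le (by exact_mod_cast hc) (by exact_mod_cast ha)).symm
  have ibc : b ≤ c ↔ φ b ≤ φ c := (hmono.le_iff_le (by exact_mod_cast hb) (by exact_mod_cast hc)).symm
  have icb : c ≤ b ↔ φ c ≤ φ b := (hmono.le_iff_le (by exact_mod_cast hc) (by exact_mod_cast hb)).symm
  simp only [Finset.mem_Icc] at ha hb hc ha' hb' hc'
  rw [cyc_mod (by omega) (by omega) (by omega) (by omega),
      cyc_mod (by omega) (by omega) (by omega) (by omega),
      cyc_mod (k := k) (by omega) (by omega) (by omega) (by omega),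
      cyc_mod (k := k) (by omega) (by omega) (by omega) (by omega)]
  have hba' : φ b ≠ φ a := by intro h; omega
  have hca' : φ c ≠ φ a := by intro h; omega
  split_ifs <;> omega

lemma stepW_map {q : ℝ} {k n : ℕ} {φ : ℕ → ℕ} (hmono : StrictMonoOn φ (Finset.Icc 1 k))
    (hmem : ∀ x ∈ Finset.Icc 1 k, φ x ∈ Finset.Icc 1 n)
    {a b : ℕ} {D : Finset ℕ} (ha : a ∈ Finset.Icc 1 k) (hb : b ∈ Finset.Icc 1 k)
    (hD : D ⊆ Finset.Icc 1 k) (haD : a ∉ D) (hab : b ≠ a) :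
    stepW q n (φ a) (D.image φ) (φ b) = stepW q k a D b := by
  have hinj : Set.InjOn φ (Finset.Icc 1 k) := hmono.injOn
  have hcard : (D.image φ).card = D.card :=
    Finset.card_image_of_injOn (hinj.mono (by exact_mod_cast hD))
  rw [stepW, stepW, hcard]
  congr 2
  rw [Finset.filter_image]
  rw [Finset.card_image_of_injOn
    (hinj.mono (by intro z hz; simp only [Finset.coe_filter, Set.mem_setOf_eq] at hz
                   exact_mod_cast hD hz.1))]
  congr 1
  apply Finset.filter_congr
  intro c hc
  exact_mod_cast cyc_compare hmono hmem ha (hD hc) hb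
    (by rintro rfl; exact haD hc) hab

lemma chainW_map {q : ℝ} {k n : ℕ} {φ : ℕ → ℕ} (hmono : StrictMonoOn φ (Finset.Icc 1 k))
    (hmem : ∀ x ∈ Finset.Icc 1 k, φ x ∈ Finset.Icc 1 n)
    {F F' : ℕ → ℕ} (l : List ℕ) (D : Finset ℕ)
    (hl : ∀ a ∈ l, a ∈ Finset.Icc 1 k) (hF' : ∀ a ∈ l, F' a ∈ Finset.Icc 1 k)
    (hne : ∀ a ∈ l, F' a ≠ a) (hD : D ⊆ Finset.Icc 1 k) (haD : ∀ a ∈ l, a ∉ D)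
    (hFF : ∀ a ∈ l, F (φ a) = φ (F' a)) :
    chainW q n F (l.map φ) (D.image φ) = chainW q k F' l D := by
  induction l generalizing D with
  | nil => simp [chainW]
  | cons a l ih =>
    simp only [List.map_cons, chainW]
    rw [hFF a (by simp)]
    rw [stepW_map hmono hmem (hl a (by simp)) (hF' a (by simp)) hD
      (haD a (by simp)) (hne a (by simp))]
    congr 1
    have hinj := hmono.injOn
    have herase : (D.image φ).erase (φ (F' a)) = (D.erase (F' a)).image φ := by
      ext y
      simp only [Finset.mem_erase, Finset.mem_image]
      constructor
      · rintro ⟨hne', c, hc, rfl⟩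
        exact ⟨c, ⟨fun h => hne' (by rw [h]), hc⟩, rfl⟩
      · rintro ⟨c, ⟨hcne, hc⟩, rfl⟩
        refine ⟨fun h => hcne ?_, c, hc, rfl⟩
        exact hinj (by exact_mod_cast hD hc) (by exact_mod_cast hF' a (by simp)) h
    rw [herase]
    exact ih (D.erase (F' a)) (fun b hb => hl b (by simp [hb])) (fun b hb => hF' b (by simp [hb]))
      (fun b hb => hne b (by simp [hb])) ((Finset.erase_subset _ _).trans hD)
      (fun b hb => fun hmem' => haD b (by simp [hb]) (Finset.mem_of_mem_erase hmem'))
      (fun b hb => hFF b (by simp [hb]))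

lemma sort_image {φ : ℕ → ℕ} {S : Finset ℕ} (hmono : ∀ x ∈ S, ∀ y ∈ S, x ≤ y → φ x ≤ φ y)
    (hinj : Set.InjOn φ S) :
    (S.image φ).sort (· ≤ ·) = (S.sort (· ≤ ·)).map φ := by
  refine (fun p s1 s2 => List.Perm.eq_of_sortedLE (List.Pairwise.sortedLE s1)
    (List.Pairwise.sortedLE s2) p) ?_ ?_ ?_
  · rw [← Multiset.coe_eq_coe]
    have h1 : ((S.image φ).sort (· ≤ ·) : Multiset ℕ) = (S.image φ).val := Finset.sort_eq _ _
    have h2 : ((S.sort (· ≤ ·)).map φ : Multiset ℕ) = Multiset.map φ S.val := by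
      rw [← Multiset.map_coe, Finset.sort_eq]
    rw [h1, h2, Finset.image_val_of_injOn hinj]
  · exact Finset.pairwise_sort _ _
  · have hs := Finset.pairwise_sort S (· ≤ ·)
    have hmem : ∀ x ∈ S.sort (· ≤ ·), x ∈ S := fun x hx => (Finset.mem_sort _).mp hx
    refine List.Pairwise.map φ (fun a b h => h) ?_
    exact List.Pairwise.imp_of_mem (fun {a b} ha hb h => hmono a (hmem a ha) b (hmem b hb) h) hs

/-- The set of extended linkings of `(A, B)`, as a finset of functions `ℕ → ℕ`. -/
def linkings (A B : Finset ℕ) : Finset (ℕ → ℕ) :=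
  (Finset.univ : Finset (↥A ↪ ↥B)).image (extendF A B)

lemma extendF_injective (A B : Finset ℕ) : Function.Injective (extendF A B) := by
  intro f g h
  ext ⟨x, hx⟩
  have := congrFun h x
  rw [extendF, extendF, dif_pos hx, dif_pos hx] at this
  exact this

lemma mem_linkings {A B : Finset ℕ} {F : ℕ → ℕ} :
    F ∈ linkings A B ↔
      (∀ a ∈ A, F a ∈ B) ∧ Set.InjOn F ↑A ∧ (∀ x, x ∉ A → F x = x) := by
  constructor
  · rintro hF
    simp only [linkings, Finset.mem_image] at hF
    obtain ⟨f, -, rfl⟩ := hF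
    refine ⟨fun a ha => by rw [extendF, dif_pos ha]; exact (f ⟨a, ha⟩).2, ?_, ?_⟩
    · intro x hx y hy h
      rw [extendF, extendF, dif_pos (Finset.mem_coe.mp hx),
        dif_pos (Finset.mem_coe.mp hy)] at h
      have := f.injective (Subtype.ext h)
      exact congrArg Subtype.val this
    · intro x hx; rw [extendF, dif_neg hx]
  · rintro ⟨h1, h2, h3⟩
    refine Finset.mem_image.mpr ⟨⟨fun a => ⟨F a, h1 a a.2⟩, ?_⟩, Finset.mem_univ _, ?_⟩
    · rintro ⟨x, hx⟩ ⟨y, hy⟩ h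
      exact Subtype.ext (h2 hx hy (congrArg Subtype.val h))
    · funext x
      rw [extendF]
      split
      · rfl
      · next hx => exact (h3 x hx).symm

lemma mlqSum_eq (q : ℝ) (k : ℕ) (cond : Finset ℕ → Finset ℕ → (ℕ → ℕ) → Prop) :
    mlqSum q k cond =
      ∑ A ∈ (Finset.Icc 1 k).powerset, ∑ B ∈ (Finset.Icc 1 k).powerset,
        ∑ F ∈ linkings A B,
          if (∀ a ∈ A ∩ B, F a = a) ∧ cond A B F then mlqW q k A B F else 0 := by
  rw [mlqSum]
  refine Finset.sum_congr rfl fun A _ => Finset.sum_congr rfl fun B _ => ?_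
  rw [linkings, Finset.sum_image (fun x _ y _ h => extendF_injective A B h)]

lemma mem_image_phiD_iff {D S : Finset ℕ} {y : ℕ} (hS : S ⊆ Icc 1 D.card)
    (hy : y ∈ Icc 1 D.card) : phiD D y ∈ S.image (phiD D) ↔ y ∈ S := by
  constructor
  · rintro h
    obtain ⟨z, hz, hzy⟩ := Finset.mem_image.mp h
    rwa [← phiD_injOn (by exact_mod_cast hS hz) (by exact_mod_cast hy) hzy]
  · intro h; exact Finset.mem_image_of_mem _ h

lemma image_psiD_phiD {D S : Finset ℕ} (hS : S ⊆ Icc 1 D.card) :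
    (S.image (phiD D)).image (psiD D) = S := by
  rw [Finset.image_image]
  rw [show S = S.image id from (Finset.image_id).symm]
  rw [Finset.image_image]
  apply Finset.image_congr
  intro z hz
  simp only [Function.comp, id]
  exact psiD_phiD (hS (by simpa using hz))

lemma image_phiD_psiD {D S : Finset ℕ} (hS : S ⊆ D) :
    (S.image (psiD D)).image (phiD D) = S := by
  rw [Finset.image_image]
  rw [show S = S.image id from (Finset.image_id).symm]
  rw [Finset.image_image]
  apply Finset.image_congr
  intro z hz
  simp only [Function.comp, id]
  exact phiD_psiD (hS (by simpa using hz))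

lemma image_psiD_subset {D S : Finset ℕ} (hS : S ⊆ D) : S.image (psiD D) ⊆ Icc 1 D.card :=
  fun y hy => by
    obtain ⟨z, hz, rfl⟩ := Finset.mem_image.mp hy
    exact psiD_mem (hS hz)

lemma image_phiD_subset {D S : Finset ℕ} (hS : S ⊆ Icc 1 D.card) : S.image (phiD D) ⊆ D :=
  fun y hy => by
    obtain ⟨z, hz, rfl⟩ := Finset.mem_image.mp hy
    exact phiD_mem (hS hz)

lemma Dprops {n i : ℕ} (hn2 : 2 ≤ n) {C : Finset ℕ} (hCs : C ⊆ Icc 1 n \ {1, 2})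
    (hCc : C.card = i) :
    (Icc 1 n \ C).card = n - i ∧ 1 ∈ Icc 1 n \ C ∧ 2 ∈ Icc 1 n \ C ∧
      phiD (Icc 1 n \ C) 1 = 1 ∧ phiD (Icc 1 n \ C) 2 = 2 := by
  have hCn : C ⊆ Icc 1 n := hCs.trans sdiff_subset
  have hcard : (Icc 1 n \ C).card = n - i := by
    rw [card_sdiff_of_subset hCn, hCc, Nat.card_Icc]; omega
  have h1 : (1 : ℕ) ∈ Icc 1 n \ C := by
    rw [mem_sdiff]
    refine ⟨by rw [mem_Icc]; omega, fun h => ?_⟩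
    have := hCs h; rw [mem_sdiff] at this; simp at this
  have h2 : (2 : ℕ) ∈ Icc 1 n \ C := by
    rw [mem_sdiff]
    refine ⟨by rw [mem_Icc]; omega, fun h => ?_⟩
    have := hCs h; rw [mem_sdiff] at this; simp at this
  have hpos : ∀ y ∈ Icc 1 n \ C, 1 ≤ y := fun y hy => by
    have := (mem_sdiff.mp hy).1; rw [mem_Icc] at this; omega
  exact ⟨hcard, h1, h2, phiD_one h1 hpos, phiD_two h1 h2 hpos⟩

/-- Backward map on sets. -/
def bwdS (n : ℕ) (C S : Finset ℕ) : Finset ℕ := S.image (phiD (Icc 1 n \ C)) ∪ C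

/-- Backward map on linkings. -/
def bwdF (n : ℕ) (C A' : Finset ℕ) (F' : ℕ → ℕ) : ℕ → ℕ := fun z =>
  if z ∈ A'.image (phiD (Icc 1 n \ C)) then
    phiD (Icc 1 n \ C) (F' (psiD (Icc 1 n \ C) z)) else z

/-- Forward map on sets: relabel `S` (a subset of `Icc 1 n` disjoint from `C`). -/
def fwdS (n : ℕ) (C S : Finset ℕ) : Finset ℕ := S.image (psiD (Icc 1 n \ C))

/-- Forward map on linkings. -/
def fwdF (n : ℕ) (A B : Finset ℕ) (F : ℕ → ℕ) : ℕ → ℕ := fun z =>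
  if z ∈ fwdS n (A ∩ B) (A \ B) then
    psiD (Icc 1 n \ (A ∩ B)) (F (phiD (Icc 1 n \ (A ∩ B)) z)) else z

lemma bwd_props (q : ℝ) {n s t i : ℕ} (hn2 : 2 ≤ n) (hii : i ≤ s) (hin : i + 2 ≤ n)
    {C A' B' : Finset ℕ} {F' : ℕ → ℕ}
    (hCs : C ⊆ Icc 1 n \ {1, 2}) (hCc : C.card = i)
    (hA' : A' ⊆ Icc 1 (n - i)) (hB' : B' ⊆ Icc 1 (n - i))
    (hF' : F' ∈ linkings A' B') (hdisj : A' ∩ B' = ∅)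
    (hcA : A'.card = s - i) (hcB : B'.card = s - i + t)
    (h1A : 1 ∉ A') (h2A : 2 ∉ A') (h1B : 1 ∉ B') (h2B : 2 ∈ B')
    (himg : 2 ∉ A'.image F') :
    bwdS n C A' ⊆ Icc 1 n ∧ bwdS n C B' ⊆ Icc 1 n ∧
    bwdF n C A' F' ∈ linkings (bwdS n C A') (bwdS n C B') ∧
    (∀ a ∈ bwdS n C A' ∩ bwdS n C B', bwdF n C A' F' a = a) ∧
    (bwdS n C A').card = s ∧ (bwdS n C B').card = s + t ∧
    1 ∉ bwdS n C A' ∧ 2 ∉ bwdS n C A' ∧ 1 ∉ bwdS n C B' ∧ 2 ∈ bwdS n C B' ∧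
    2 ∉ (bwdS n C A').image (bwdF n C A' F') ∧
    bwdS n C A' ∩ bwdS n C B' = C ∧
    fwdS n C (bwdS n C A' \ bwdS n C B') = A' ∧
    fwdS n C (bwdS n C B' \ bwdS n C A') = B' ∧
    fwdF n (bwdS n C A') (bwdS n C B') (bwdF n C A' F') = F' ∧
    mlqW q n (bwdS n C A') (bwdS n C B') (bwdF n C A' F') = mlqW q (n - i) A' B' F' := by
  obtain ⟨hDc, h1D, h2D, hp1, hp2⟩ := Dprops hn2 hCs hCc
  set D := Icc 1 n \ C with hDdef
  have hk2 : 2 ≤ n - i := by omega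
  have hDsub : D ⊆ Icc 1 n := sdiff_subset
  have hA'k : A' ⊆ Icc 1 D.card := by rw [hDc]; exact hA'
  have hB'k : B' ⊆ Icc 1 D.card := by rw [hDc]; exact hB'
  have hphiA : A'.image (phiD D) ⊆ D := image_phiD_subset hA'k
  have hphiB : B'.image (phiD D) ⊆ D := image_phiD_subset hB'k
  have hnotC : ∀ x ∈ D, x ∉ C := fun x hx => (mem_sdiff.mp hx).2
  obtain ⟨hFmap, hFinj, hFid⟩ := mem_linkings.mp hF'
  have hAB' : ∀ x ∈ A', x ∉ B' := fun x hx hx' => by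
    have : x ∈ A' ∩ B' := mem_inter.mpr ⟨hx, hx'⟩
    rw [hdisj] at this; exact absurd this (notMem_empty x)
  have h1k : (1 : ℕ) ∈ Icc 1 D.card := by rw [mem_Icc]; omega
  have h2k : (2 : ℕ) ∈ Icc 1 D.card := by rw [mem_Icc]; omega
  -- main set computations
  have hinter : bwdS n C A' ∩ bwdS n C B' = C := by
    ext x
    simp only [bwdS, mem_inter, mem_union]
    constructor
    · rintro ⟨h1 | h1, h2 | h2⟩
      · obtain ⟨a, ha, rfl⟩ := Finset.mem_image.mp h1
        rw [mem_image_phiD_iff hB'k (hA'k ha)] at h2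
        exact absurd h2 (hAB' a ha)
      · obtain ⟨a, ha, rfl⟩ := Finset.mem_image.mp h1
        exact absurd h2 (hnotC _ (hphiA h1))
      · exact absurd h1 (hnotC _ (hphiB h2))
      · exact h1
    · intro hx; exact ⟨Or.inr hx, Or.inr hx⟩
  have hABd : bwdS n C A' \ bwdS n C B' = A'.image (phiD D) := by
    ext x
    simp only [bwdS, mem_sdiff, mem_union]
    constructor
    · rintro ⟨h1 | h1, h2⟩
      · exact h1
      · exact absurd (Or.inr h1) h2
    · intro h1
      obtain ⟨a, ha, rfl⟩ := Finset.mem_image.mp h1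
      refine ⟨Or.inl h1, ?_⟩
      rintro (h2 | h2)
      · rw [mem_image_phiD_iff hB'k (hA'k ha)] at h2
        exact hAB' a ha h2
      · exact hnotC _ (hphiA h1) h2
  have hBAd : bwdS n C B' \ bwdS n C A' = B'.image (phiD D) := by
    ext x
    simp only [bwdS, mem_sdiff, mem_union]
    constructor
    · rintro ⟨h1 | h1, h2⟩
      · exact h1
      · exact absurd (Or.inr h1) h2
    · intro h1
      obtain ⟨a, ha, rfl⟩ := Finset.mem_image.mp h1
      refine ⟨Or.inl h1, ?_⟩
      rintro (h2 | h2)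
      · rw [mem_image_phiD_iff hA'k (hB'k ha)] at h2
        exact hAB' _ h2 ha
      · exact hnotC _ (hphiB h1) h2
  have hsubA : bwdS n C A' ⊆ Icc 1 n :=
    union_subset (hphiA.trans hDsub) (hCs.trans sdiff_subset)
  have hsubB : bwdS n C B' ⊆ Icc 1 n :=
    union_subset (hphiB.trans hDsub) (hCs.trans sdiff_subset)
  have hdisjAC : Disjoint (A'.image (phiD D)) C := by
    rw [Finset.disjoint_left]; exact fun x hx hxC => hnotC _ (hphiA hx) hxC
  have hdisjBC : Disjoint (B'.image (phiD D)) C := by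
    rw [Finset.disjoint_left]; exact fun x hx hxC => hnotC _ (hphiB hx) hxC
  have hinjA : Set.InjOn (phiD D) ↑A' := phiD_injOn.mono (by exact_mod_cast hA'k)
  have hinjB : Set.InjOn (phiD D) ↑B' := phiD_injOn.mono (by exact_mod_cast hB'k)
  -- the map F on the inserted queue
  have hFval : ∀ a ∈ A', bwdF n C A' F' (phiD D a) = phiD D (F' a) := by
    intro a ha
    simp only [bwdF]
    rw [← hDdef]
    rw [if_pos (Finset.mem_image_of_mem (phiD D) ha), psiD_phiD (hA'k ha)]
  -- linkings membership
  have hmemF : bwdF n C A' F' ∈ linkings (bwdS n C A') (bwdS n C B') := by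
    rw [mem_linkings]
    refine ⟨?_, ?_, ?_⟩
    · intro a ha
      rcases mem_union.mp ha with h | h
      · obtain ⟨z, hz, rfl⟩ := Finset.mem_image.mp h
        rw [hFval z hz]
        exact mem_union.mpr (Or.inl (Finset.mem_image_of_mem (phiD D) (hFmap z hz)))
      · have hnot : a ∉ A'.image (phiD D) := fun h' => hnotC _ (hphiA h') h
        simp only [bwdF]
        rw [← hDdef]
        rw [if_neg hnot]
        exact mem_union.mpr (Or.inr h)
    · intro x hx y hy hxy
      rw [mem_coe] at hx hy
      have hcase : ∀ z : ℕ, z ∈ C → bwdF n C A' F' z = z := by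
        intro z hzC
        have : z ∉ A'.image (phiD D) := fun h' => hnotC _ (hphiA h') hzC
        simp only [bwdF]
        rw [← hDdef]
        rw [if_neg this]
      rcases mem_union.mp hx with h1 | h1 <;> rcases mem_union.mp hy with h2 | h2
      · obtain ⟨a, ha, rfl⟩ := Finset.mem_image.mp h1
        obtain ⟨b, hb, rfl⟩ := Finset.mem_image.mp h2
        rw [hFval a ha, hFval b hb] at hxy
        have h3 := hinjB (mem_coe.mpr (hFmap a ha)) (mem_coe.mpr (hFmap b hb)) hxy
        have h4 : a = b := hFinj (mem_coe.mpr ha) (mem_coe.mpr hb) h3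
        rw [h4]
      · obtain ⟨a, ha, rfl⟩ := Finset.mem_image.mp h1
        rw [hFval a ha, hcase y h2] at hxy
        exact absurd h2 (hxy ▸ hnotC _ (hphiB (Finset.mem_image_of_mem (phiD D) (hFmap a ha))))
      · obtain ⟨b, hb, rfl⟩ := Finset.mem_image.mp h2
        rw [hFval b hb, hcase x h1] at hxy
        exact absurd h1 (hxy ▸ hnotC _ (hphiB (Finset.mem_image_of_mem (phiD D) (hFmap b hb))))
      · rw [hcase x h1, hcase y h2] at hxy; exact hxy
    · intro x hx
      have : x ∉ A'.image (phiD D) := fun h => hx (mem_union.mpr (Or.inl h))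
      simp only [bwdF]
      rw [← hDdef]
      rw [if_neg this]
  have htriv : ∀ a ∈ bwdS n C A' ∩ bwdS n C B', bwdF n C A' F' a = a := by
    intro a ha
    rw [hinter] at ha
    have : a ∉ A'.image (phiD D) := fun h => hnotC _ (hphiA h) ha
    simp only [bwdF]
    rw [← hDdef]
    rw [if_neg this]
  have hcardA : (bwdS n C A').card = s := by
    rw [bwdS, card_union_of_disjoint hdisjAC, card_image_of_injOn hinjA, hcA, hCc]; omega
  have hcardB : (bwdS n C B').card = s + t := by
    rw [bwdS, card_union_of_disjoint hdisjBC, card_image_of_injOn hinjB, hcB, hCc]; omega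
  have hCnot12 : ∀ x ∈ C, x ≠ 1 ∧ x ≠ 2 := by
    intro x hx
    have := hCs hx; rw [mem_sdiff] at this
    constructor <;> rintro rfl <;> simp at this
  have h1A2 : 1 ∉ bwdS n C A' := by
    intro h
    rcases mem_union.mp h with h | h
    · have h' : phiD D 1 ∈ A'.image (phiD D) := by rw [hp1]; exact h
      rw [mem_image_phiD_iff hA'k h1k] at h'
      exact h1A h'
    · exact (hCnot12 1 h).1 rfl
  have h2A2 : 2 ∉ bwdS n C A' := by
    intro h
    rcases mem_union.mp h with h | h
    · have h' : phiD D 2 ∈ A'.image (phiD D) := by rw [hp2]; exact h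
      rw [mem_image_phiD_iff hA'k h2k] at h'
      exact h2A h'
    · exact (hCnot12 2 h).2 rfl
  have h1B2 : 1 ∉ bwdS n C B' := by
    intro h
    rcases mem_union.mp h with h | h
    · have h' : phiD D 1 ∈ B'.image (phiD D) := by rw [hp1]; exact h
      rw [mem_image_phiD_iff hB'k h1k] at h'
      exact h1B h'
    · exact (hCnot12 1 h).1 rfl
  have h2B2 : 2 ∈ bwdS n C B' := by
    have h : phiD D 2 ∈ B'.image (phiD D) := Finset.mem_image_of_mem (phiD D) h2B
    rw [hp2] at h
    exact mem_union.mpr (Or.inl h)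
  have himg2 : 2 ∉ (bwdS n C A').image (bwdF n C A' F') := by
    intro h
    obtain ⟨a, ha, hFa⟩ := Finset.mem_image.mp h
    rcases mem_union.mp ha with h' | h'
    · obtain ⟨z, hz, rfl⟩ := Finset.mem_image.mp h'
      rw [hFval z hz] at hFa
      have h2' : phiD D (F' z) = phiD D 2 := by rw [hFa, hp2]
      have h3 := phiD_injOn (mem_coe.mpr (hB'k (hFmap z hz))) (mem_coe.mpr h2k) h2'
      exact himg (Finset.mem_image.mpr ⟨z, hz, h3⟩)
    · have hnot : a ∉ A'.image (phiD D) := fun h'' => hnotC _ (hphiA h'') h'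
      simp only [bwdF] at hFa
      rw [← hDdef] at hFa
      rw [if_neg hnot] at hFa
      rw [hFa] at h'
      exact (hCnot12 2 h').2 rfl
  have hfwdA : fwdS n C (bwdS n C A' \ bwdS n C B') = A' := by
    rw [hABd, fwdS]
    exact image_psiD_phiD hA'k
  have hfwdB : fwdS n C (bwdS n C B' \ bwdS n C A') = B' := by
    rw [hBAd, fwdS]
    exact image_psiD_phiD hB'k
  have hfwdF : fwdF n (bwdS n C A') (bwdS n C B') (bwdF n C A' F') = F' := by
    funext z
    simp only [fwdF, fwdS, hinter, hABd, ← hDdef, image_psiD_phiD hA'k]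
    by_cases hz : z ∈ A'
    · rw [if_pos hz, hFval z hz]
      exact psiD_phiD (hB'k (hFmap z hz))
    · rw [if_neg hz]
      exact (hFid z hz).symm
  have hA'd : A' \ B' = A' := by
    rw [Finset.sdiff_eq_self_iff_disjoint, Finset.disjoint_left]
    exact fun x hx hx' => hAB' x hx hx'
  have hB'd : B' \ A' = B' := by
    rw [Finset.sdiff_eq_self_iff_disjoint, Finset.disjoint_left]
    exact fun x hx hx' => hAB' x hx' hx
  have hw : mlqW q n (bwdS n C A') (bwdS n C B') (bwdF n C A' F') = mlqW q (n - i) A' B' F' := by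
    rw [mlqW, mlqW, hABd, hBAd, hA'd, hB'd]
    have hsort : (A'.image (phiD D)).sort (· ≤ ·) = (A'.sort (· ≤ ·)).map (phiD D) :=
      sort_image (fun x hx y hy h => phiD_monoOn (hA'k hx) (hA'k hy) h) hinjA
    rw [hsort]
    apply chainW_map (k := n - i)
    · exact hDc ▸ phiD_strictMonoOn
    · intro x hx
      exact hDsub (phiD_mem (by rw [hDc]; exact hx))
    · intro a ha; exact hA' ((Finset.mem_sort _).mp ha)
    · intro a ha; exact hB' (hFmap a ((Finset.mem_sort _).mp ha))
    · intro a ha h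
      exact hAB' _ ((Finset.mem_sort _).mp ha) (h ▸ hFmap a ((Finset.mem_sort _).mp ha))
    · exact hB'
    · intro a ha; exact fun hmem => hAB' _ ((Finset.mem_sort _).mp ha) hmem
    · intro a ha; exact hFval a ((Finset.mem_sort _).mp ha)
  exact ⟨hsubA, hsubB, hmemF, htriv, hcardA, hcardB, h1A2, h2A2, h1B2, h2B2, himg2,
    hinter, hfwdA, hfwdB, hfwdF, hw⟩

lemma psiD_injOn {D : Finset ℕ} : Set.InjOn (psiD D) ↑D := by
  intro x hx y hy h
  rw [← phiD_psiD (mem_coe.mp hx), ← phiD_psiD (mem_coe.mp hy), h]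

lemma fwd_props {n s t i : ℕ} (hn2 : 2 ≤ n)
    {A B : Finset ℕ} {F : ℕ → ℕ}
    (hA : A ⊆ Icc 1 n) (hB : B ⊆ Icc 1 n) (hF : F ∈ linkings A B)
    (htriv : ∀ a ∈ A ∩ B, F a = a)
    (hcA : A.card = s) (hcB : B.card = s + t)
    (h1A : 1 ∉ A) (h2A : 2 ∉ A) (h1B : 1 ∉ B) (h2B : 2 ∈ B)
    (himg : 2 ∉ A.image F) (hcap : (A ∩ B).card = i) :
    i ≤ s ∧ i + 2 ≤ n ∧
    A ∩ B ⊆ Icc 1 n \ {1, 2} ∧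
    fwdS n (A ∩ B) (A \ B) ⊆ Icc 1 (n - i) ∧ fwdS n (A ∩ B) (B \ A) ⊆ Icc 1 (n - i) ∧
    fwdF n A B F ∈ linkings (fwdS n (A ∩ B) (A \ B)) (fwdS n (A ∩ B) (B \ A)) ∧
    fwdS n (A ∩ B) (A \ B) ∩ fwdS n (A ∩ B) (B \ A) = ∅ ∧
    (fwdS n (A ∩ B) (A \ B)).card = s - i ∧ (fwdS n (A ∩ B) (B \ A)).card = s - i + t ∧
    1 ∉ fwdS n (A ∩ B) (A \ B) ∧ 2 ∉ fwdS n (A ∩ B) (A \ B) ∧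
    1 ∉ fwdS n (A ∩ B) (B \ A) ∧ 2 ∈ fwdS n (A ∩ B) (B \ A) ∧
    2 ∉ (fwdS n (A ∩ B) (A \ B)).image (fwdF n A B F) ∧
    bwdS n (A ∩ B) (fwdS n (A ∩ B) (A \ B)) = A ∧
    bwdS n (A ∩ B) (fwdS n (A ∩ B) (B \ A)) = B ∧
    bwdF n (A ∩ B) (fwdS n (A ∩ B) (A \ B)) (fwdF n A B F) = F := by
  have hCs : A ∩ B ⊆ Icc 1 n \ {1, 2} := by
    intro x hx
    rw [mem_sdiff]
    refine ⟨hA (mem_inter.mp hx).1, ?_⟩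
    simp only [mem_insert, mem_singleton]
    rintro (rfl | rfl)
    · exact h1A (mem_inter.mp hx).1
    · exact h2A (mem_inter.mp hx).1
  obtain ⟨hDc, h1D, h2D, hp1, hp2⟩ := Dprops hn2 hCs hcap
  set D := Icc 1 n \ (A ∩ B) with hDdef
  have hii : i ≤ s := by
    rw [← hcap, ← hcA]; exact card_le_card inter_subset_left
  have hin : i + 2 ≤ n := by
    have h12 : ({1, 2} : Finset ℕ) ⊆ Icc 1 n := by
      intro x hx; simp only [mem_insert, mem_singleton] at hx
      rcases hx with rfl | rfl <;> rw [mem_Icc] <;> omega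
    have := card_le_card hCs
    rw [hcap, card_sdiff_of_subset h12, Nat.card_Icc] at this
    have : ({1,2} : Finset ℕ).card = 2 := by decide
    omega
  obtain ⟨hFmap, hFinj, hFid⟩ := mem_linkings.mp hF
  have hABD : A \ B ⊆ D := by
    intro x hx
    rw [hDdef, mem_sdiff]
    exact ⟨hA (mem_sdiff.mp hx).1, fun h => (mem_sdiff.mp hx).2 (mem_inter.mp h).2⟩
  have hBAD : B \ A ⊆ D := by
    intro x hx
    rw [hDdef, mem_sdiff]
    exact ⟨hB (mem_sdiff.mp hx).1, fun h => (mem_sdiff.mp hx).2 (mem_inter.mp h).1⟩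
  have hFdiff : ∀ x ∈ A \ B, F x ∈ B \ A := by
    intro x hx
    obtain ⟨hxA, hxB⟩ := mem_sdiff.mp hx
    have hFB : F x ∈ B := hFmap x hxA
    rw [mem_sdiff]
    refine ⟨hFB, fun hFA => ?_⟩
    have h1 : F x ∈ A ∩ B := mem_inter.mpr ⟨hFA, hFB⟩
    have h2 : F (F x) = F x := htriv _ h1
    have h3 : x = F x := hFinj (mem_coe.mpr hxA) (mem_coe.mpr hFA) h2.symm
    exact hxB (h3 ▸ hFB)
  have hk1 : 1 ∈ Icc 1 D.card := by rw [mem_Icc]; omega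
  have hk2 : 2 ∈ Icc 1 D.card := by rw [mem_Icc]; omega
  have hsubA' : fwdS n (A ∩ B) (A \ B) ⊆ Icc 1 (n - i) := by
    rw [fwdS, ← hDdef, ← hDc]; exact image_psiD_subset hABD
  have hsubB' : fwdS n (A ∩ B) (B \ A) ⊆ Icc 1 (n - i) := by
    rw [fwdS, ← hDdef, ← hDc]; exact image_psiD_subset hBAD
  have hmemA' : ∀ z, z ∈ fwdS n (A ∩ B) (A \ B) ↔ ∃ x ∈ A \ B, psiD D x = z := by
    intro z; rw [fwdS, ← hDdef]; simp [Finset.mem_image]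
  have hmemB' : ∀ z, z ∈ fwdS n (A ∩ B) (B \ A) ↔ ∃ x ∈ B \ A, psiD D x = z := by
    intro z; rw [fwdS, ← hDdef]; simp [Finset.mem_image]
  have hdisj : fwdS n (A ∩ B) (A \ B) ∩ fwdS n (A ∩ B) (B \ A) = ∅ := by
    rw [Finset.eq_empty_iff_forall_notMem]
    intro z hz
    obtain ⟨hz1, hz2⟩ := mem_inter.mp hz
    obtain ⟨x, hx, hxz⟩ := (hmemA' z).mp hz1
    obtain ⟨y, hy, hyz⟩ := (hmemB' z).mp hz2
    have : x = y := by
      rw [← phiD_psiD (hABD hx), ← phiD_psiD (hBAD hy), hxz, hyz]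
    rw [this] at hx
    exact (mem_sdiff.mp hy).2 (mem_sdiff.mp hx).1
  have hcardA' : (fwdS n (A ∩ B) (A \ B)).card = s - i := by
    rw [fwdS, ← hDdef, card_image_of_injOn (psiD_injOn.mono (by exact_mod_cast hABD))]
    have := Finset.card_sdiff_add_card_inter A B
    omega
  have hcardB' : (fwdS n (A ∩ B) (B \ A)).card = s - i + t := by
    rw [fwdS, ← hDdef, card_image_of_injOn (psiD_injOn.mono (by exact_mod_cast hBAD))]
    have h1 := Finset.card_sdiff_add_card_inter B A
    rw [inter_comm] at h1
    omega
  have hF2val : ∀ x ∈ A \ B, fwdF n A B F (psiD D x) = psiD D (F x) := by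
    intro x hx
    have hz : psiD D x ∈ fwdS n (A ∩ B) (A \ B) := by
      rw [fwdS, ← hDdef]; exact Finset.mem_image_of_mem _ hx
    simp only [fwdF, ← hDdef]
    rw [if_pos hz, phiD_psiD (hABD hx)]
  have h1A' : 1 ∉ fwdS n (A ∩ B) (A \ B) := by
    intro h
    obtain ⟨x, hx, hxz⟩ := (hmemA' 1).mp h
    have : x = 1 := by rw [← phiD_psiD (hABD hx), hxz, hp1]
    rw [this] at hx
    exact h1A (mem_sdiff.mp hx).1
  have h2A' : 2 ∉ fwdS n (A ∩ B) (A \ B) := by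
    intro h
    obtain ⟨x, hx, hxz⟩ := (hmemA' 2).mp h
    have : x = 2 := by rw [← phiD_psiD (hABD hx), hxz, hp2]
    rw [this] at hx
    exact h2A (mem_sdiff.mp hx).1
  have h1B' : 1 ∉ fwdS n (A ∩ B) (B \ A) := by
    intro h
    obtain ⟨x, hx, hxz⟩ := (hmemB' 1).mp h
    have : x = 1 := by rw [← phiD_psiD (hBAD hx), hxz, hp1]
    rw [this] at hx
    exact h1B (mem_sdiff.mp hx).1
  have hpsi2 : psiD D 2 = 2 := by
    have := psiD_phiD (D := D) hk2
    rwa [hp2] at this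
  have h2B' : 2 ∈ fwdS n (A ∩ B) (B \ A) := by
    rw [hmemB' 2]
    exact ⟨2, mem_sdiff.mpr ⟨h2B, h2A⟩, hpsi2⟩
  have hlink : fwdF n A B F ∈ linkings (fwdS n (A ∩ B) (A \ B)) (fwdS n (A ∩ B) (B \ A)) := by
    rw [mem_linkings]
    refine ⟨?_, ?_, ?_⟩
    · intro z hz
      obtain ⟨x, hx, rfl⟩ := (hmemA' z).mp hz
      rw [hF2val x hx, hmemB']
      exact ⟨F x, hFdiff x hx, rfl⟩
    · intro z1 hz1 z2 hz2 h
      obtain ⟨x, hx, rfl⟩ := (hmemA' z1).mp (mem_coe.mp hz1)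
      obtain ⟨y, hy, rfl⟩ := (hmemA' z2).mp (mem_coe.mp hz2)
      rw [hF2val x hx, hF2val y hy] at h
      have h1 : F x = F y := psiD_injOn (mem_coe.mpr (hBAD (hFdiff x hx)))
        (mem_coe.mpr (hBAD (hFdiff y hy))) h
      have h2 : x = y := hFinj (mem_coe.mpr (mem_sdiff.mp hx).1)
        (mem_coe.mpr (mem_sdiff.mp hy).1) h1
      rw [h2]
    · intro z hz
      simp only [fwdF, ← hDdef]
      rw [if_neg (by rw [fwdS, ← hDdef] at hz ⊢; exact hz)]
  have himg' : 2 ∉ (fwdS n (A ∩ B) (A \ B)).image (fwdF n A B F) := by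
    intro h
    obtain ⟨z, hz, hFz⟩ := Finset.mem_image.mp h
    obtain ⟨x, hx, rfl⟩ := (hmemA' z).mp hz
    rw [hF2val x hx] at hFz
    have : F x = 2 := by
      rw [← phiD_psiD (hBAD (hFdiff x hx)), hFz, hp2]
    exact himg (Finset.mem_image.mpr ⟨x, (mem_sdiff.mp hx).1, this⟩)
  have hbwdA : bwdS n (A ∩ B) (fwdS n (A ∩ B) (A \ B)) = A := by
    rw [bwdS, fwdS, ← hDdef, image_phiD_psiD hABD, Finset.sdiff_union_inter]
  have hbwdB : bwdS n (A ∩ B) (fwdS n (A ∩ B) (B \ A)) = B := by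
    rw [bwdS, fwdS, ← hDdef, image_phiD_psiD hBAD, inter_comm, Finset.sdiff_union_inter]
  have hbwdF : bwdF n (A ∩ B) (fwdS n (A ∩ B) (A \ B)) (fwdF n A B F) = F := by
    funext z
    simp only [bwdF, fwdS, ← hDdef, image_phiD_psiD hABD]
    by_cases hz : z ∈ A \ B
    · rw [if_pos hz]
      obtain ⟨hzA, hzB⟩ := mem_sdiff.mp hz
      rw [hF2val z hz, phiD_psiD (hBAD (hFdiff z hz))]
    · rw [if_neg hz]
      by_cases hzA : z ∈ A
      · exact (htriv z (mem_inter.mpr ⟨hzA, by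
          by_contra hzB
          exact hz (mem_sdiff.mpr ⟨hzA, hzB⟩)⟩)).symm
      · exact (hFid z hzA).symm
  exact ⟨hii, hin, hCs, hsubA', hsubB', hlink, hdisj, hcardA', hcardB',
    h1A', h2A', h1B', h2B', himg', hbwdA, hbwdB, hbwdF⟩

lemma Si_eq (q : ℝ) (s t n i : ℕ) (hn2 : 2 ≤ n) (hii : i ≤ s) (hin : i + 2 ≤ n) :
    (∑ x ∈ ((Icc 1 n).powerset.sigma fun _ => (Icc 1 n).powerset).sigma
        (fun p => linkings p.1 p.2),
      if ((∀ a ∈ x.1.1 ∩ x.1.2, x.2 a = a) ∧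
          (x.1.1.card = s ∧ x.1.2.card = s + t ∧ 1 ∉ x.1.1 ∧ 2 ∉ x.1.1 ∧ 1 ∉ x.1.2 ∧
            2 ∈ x.1.2 ∧ 2 ∉ x.1.1.image x.2)) ∧ (x.1.1 ∩ x.1.2).card = i
      then mlqW q n x.1.1 x.1.2 x.2 else 0)
    = ((n - 2).choose i : ℝ) * tauA q (s - i) t (n - i) := by
  classical
  have h12 : ({1, 2} : Finset ℕ) ⊆ Icc 1 n := by
    intro x hx; simp only [mem_insert, mem_singleton] at hx
    rcases hx with rfl | rfl <;> rw [mem_Icc] <;> omega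
  have hcardC : ((Icc 1 n \ {1, 2}).powersetCard i).card = (n - 2).choose i := by
    rw [card_powersetCard, card_sdiff_of_subset h12, Nat.card_Icc]
    congr 1
  have e2 : tauA q (s - i) t (n - i)
      = ∑ A ∈ (Icc 1 (n - i)).powerset, ∑ B ∈ (Icc 1 (n - i)).powerset,
          ∑ F ∈ linkings A B,
          if (∀ a ∈ A ∩ B, F a = a) ∧ A ∩ B = ∅ ∧ A.card = s - i ∧ B.card = s - i + t ∧
              1 ∉ A ∧ 2 ∉ A ∧ 1 ∉ B ∧ 2 ∈ B ∧ 2 ∉ A.image F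
          then mlqW q (n - i) A B F else 0 := by
    rw [tauA, mlqSum_eq]
    refine Finset.sum_congr rfl fun A _ => Finset.sum_congr rfl fun B _ =>
      Finset.sum_congr rfl fun F _ => ?_
    exact ite_congr rfl (fun _ => rfl) (fun _ => rfl)
  rw [e2]
  -- sigma-encode the left-hand side
  rw [show (∑ x ∈ ((Icc 1 n).powerset.sigma fun _ => (Icc 1 n).powerset).sigma
        (fun p => linkings p.1 p.2),
      if ((∀ a ∈ x.1.1 ∩ x.1.2, x.2 a = a) ∧
          (x.1.1.card = s ∧ x.1.2.card = s + t ∧ 1 ∉ x.1.1 ∧ 2 ∉ x.1.1 ∧ 1 ∉ x.1.2 ∧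
            2 ∈ x.1.2 ∧ 2 ∉ x.1.1.image x.2)) ∧ (x.1.1 ∩ x.1.2).card = i
      then mlqW q n x.1.1 x.1.2 x.2 else 0)
    = ∑ x ∈ (((Icc 1 n).powerset.sigma fun _ => (Icc 1 n).powerset).sigma
        fun p => linkings p.1 p.2).filter (fun x =>
          ((∀ a ∈ x.1.1 ∩ x.1.2, x.2 a = a) ∧
            (x.1.1.card = s ∧ x.1.2.card = s + t ∧ 1 ∉ x.1.1 ∧ 2 ∉ x.1.1 ∧ 1 ∉ x.1.2 ∧
              2 ∈ x.1.2 ∧ 2 ∉ x.1.1.image x.2)) ∧ (x.1.1 ∩ x.1.2).card = i),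
        mlqW q n x.1.1 x.1.2 x.2 from (Finset.sum_filter _ _).symm]
  rw [show (((n - 2).choose i : ℝ) * ∑ A ∈ (Icc 1 (n - i)).powerset,
        ∑ B ∈ (Icc 1 (n - i)).powerset,
        ∑ F ∈ linkings A B,
        if (∀ a ∈ A ∩ B, F a = a) ∧ A ∩ B = ∅ ∧ A.card = s - i ∧ B.card = s - i + t ∧
            1 ∉ A ∧ 2 ∉ A ∧ 1 ∉ B ∧ 2 ∈ B ∧ 2 ∉ A.image F
        then mlqW q (n - i) A B F else 0)
      = ∑ _C ∈ (Icc 1 n \ {1, 2}).powersetCard i, ∑ A ∈ (Icc 1 (n - i)).powerset,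
          ∑ B ∈ (Icc 1 (n - i)).powerset, ∑ F ∈ linkings A B,
          if (∀ a ∈ A ∩ B, F a = a) ∧ A ∩ B = ∅ ∧ A.card = s - i ∧ B.card = s - i + t ∧
              1 ∉ A ∧ 2 ∉ A ∧ 1 ∉ B ∧ 2 ∈ B ∧ 2 ∉ A.image F
          then mlqW q (n - i) A B F else 0
      from by rw [Finset.sum_const, hcardC, nsmul_eq_mul]]
  rw [show (∑ _C ∈ (Icc 1 n \ {1, 2}).powersetCard i, ∑ A ∈ (Icc 1 (n - i)).powerset,
          ∑ B ∈ (Icc 1 (n - i)).powerset, ∑ F ∈ linkings A B,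
          if (∀ a ∈ A ∩ B, F a = a) ∧ A ∩ B = ∅ ∧ A.card = s - i ∧ B.card = s - i + t ∧
              1 ∉ A ∧ 2 ∉ A ∧ 1 ∉ B ∧ 2 ∈ B ∧ 2 ∉ A.image F
          then mlqW q (n - i) A B F else 0)
      = ∑ y ∈ ((((Icc 1 n \ {1, 2}).powersetCard i).sigma
            fun _ => (Icc 1 (n - i)).powerset).sigma fun _ => (Icc 1 (n - i)).powerset).sigma
            (fun p => linkings p.1.2 p.2) |>.filter (fun y =>
            (∀ a ∈ y.1.1.2 ∩ y.1.2, y.2 a = a) ∧ y.1.1.2 ∩ y.1.2 = ∅ ∧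
              y.1.1.2.card = s - i ∧ y.1.2.card = s - i + t ∧ 1 ∉ y.1.1.2 ∧ 2 ∉ y.1.1.2 ∧
              1 ∉ y.1.2 ∧ 2 ∈ y.1.2 ∧ 2 ∉ y.1.1.2.image y.2),
          mlqW q (n - i) y.1.1.2 y.1.2 y.2 from by
      rw [Finset.sum_filter, Finset.sum_sigma, Finset.sum_sigma, Finset.sum_sigma]]
  refine Finset.sum_nbij'
    (i := fun x => ⟨⟨⟨x.1.1 ∩ x.1.2, fwdS n (x.1.1 ∩ x.1.2) (x.1.1 \ x.1.2)⟩,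
        fwdS n (x.1.1 ∩ x.1.2) (x.1.2 \ x.1.1)⟩, fwdF n x.1.1 x.1.2 x.2⟩)
    (j := fun y => ⟨⟨bwdS n y.1.1.1 y.1.1.2, bwdS n y.1.1.1 y.1.2⟩,
        bwdF n y.1.1.1 y.1.1.2 y.2⟩) ?_ ?_ ?_ ?_ ?_
  · -- forward membership
    rintro ⟨⟨A, B⟩, F⟩ hx
    obtain ⟨hxs, hxP⟩ := Finset.mem_filter.mp hx
    obtain ⟨⟨htriv, hcA, hcB, h1A, h2A, h1B, h2B, himg⟩, hcap⟩ := hxP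
    have hA := Finset.mem_powerset.mp (mem_sigma.mp (mem_sigma.mp hxs).1).1
    have hB := Finset.mem_powerset.mp (mem_sigma.mp (mem_sigma.mp hxs).1).2
    have hFlk := (mem_sigma.mp hxs).2
    obtain ⟨_, _, hCs, hsubA', hsubB', hlink, hdisj, hcardA', hcardB',
      h1A', h2A', h1B', h2B', himg', -, -, -⟩ :=
      fwd_props hn2 hA hB hFlk htriv hcA hcB h1A h2A h1B h2B himg hcap
    rw [Finset.mem_filter]
    refine ⟨?_, ?_, hdisj, hcardA', hcardB', h1A', h2A', h1B', h2B', himg'⟩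
    · rw [mem_sigma]
      exact ⟨mem_sigma.mpr ⟨mem_sigma.mpr ⟨mem_powersetCard.mpr ⟨hCs, hcap⟩,
        Finset.mem_powerset.mpr hsubA'⟩, Finset.mem_powerset.mpr hsubB'⟩, hlink⟩
    · intro a ha
      rw [hdisj] at ha
      exact absurd ha (notMem_empty a)
  · -- backward membership
    rintro ⟨⟨⟨C, A'⟩, B'⟩, F'⟩ hy
    obtain ⟨hys, hyQ⟩ := Finset.mem_filter.mp hy
    obtain ⟨htriv', hdisj, hcA', hcB', h1A', h2A', h1B', h2B', himg'⟩ := hyQ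
    have hC := (mem_sigma.mp (mem_sigma.mp (mem_sigma.mp hys).1).1).1
    have hA' := Finset.mem_powerset.mp (mem_sigma.mp (mem_sigma.mp (mem_sigma.mp hys).1).1).2
    have hB' := Finset.mem_powerset.mp (mem_sigma.mp (mem_sigma.mp hys).1).2
    have hF' := (mem_sigma.mp hys).2
    obtain ⟨hCs, hCc⟩ := mem_powersetCard.mp hC
    obtain ⟨hsubA, hsubB, hmemF, htriv, hcardA, hcardB, h1A, h2A, h1B, h2B, himg,
      hinter, -, -, -, -⟩ :=
      bwd_props q hn2 hii hin hCs hCc hA' hB' hF' hdisj hcA' hcB' h1A' h2A' h1B' h2B' himg'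
    rw [Finset.mem_filter]
    refine ⟨?_, ⟨htriv, hcardA, hcardB, h1A, h2A, h1B, h2B, himg⟩, by rw [hinter]; exact hCc⟩
    rw [mem_sigma]
    exact ⟨mem_sigma.mpr ⟨Finset.mem_powerset.mpr hsubA, Finset.mem_powerset.mpr hsubB⟩, hmemF⟩
  · -- left inverse
    rintro ⟨⟨A, B⟩, F⟩ hx
    obtain ⟨hxs, hxP⟩ := Finset.mem_filter.mp hx
    obtain ⟨⟨htriv, hcA, hcB, h1A, h2A, h1B, h2B, himg⟩, hcap⟩ := hxP
    have hA := Finset.mem_powerset.mp (mem_sigma.mp (mem_sigma.mp hxs).1).1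
    have hB := Finset.mem_powerset.mp (mem_sigma.mp (mem_sigma.mp hxs).1).2
    have hFlk := (mem_sigma.mp hxs).2
    obtain ⟨-, -, -, -, -, -, -, -, -, -, -, -, -, -, hbwdA, hbwdB, hbwdF⟩ :=
      fwd_props hn2 hA hB hFlk htriv hcA hcB h1A h2A h1B h2B himg hcap
    simp only [hbwdA, hbwdB, hbwdF]
  · -- right inverse
    rintro ⟨⟨⟨C, A'⟩, B'⟩, F'⟩ hy
    obtain ⟨hys, hyQ⟩ := Finset.mem_filter.mp hy
    obtain ⟨htriv', hdisj, hcA', hcB', h1A', h2A', h1B', h2B', himg'⟩ := hyQ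
    have hC := (mem_sigma.mp (mem_sigma.mp (mem_sigma.mp hys).1).1).1
    have hA' := Finset.mem_powerset.mp (mem_sigma.mp (mem_sigma.mp (mem_sigma.mp hys).1).1).2
    have hB' := Finset.mem_powerset.mp (mem_sigma.mp (mem_sigma.mp hys).1).2
    have hF' := (mem_sigma.mp hys).2
    obtain ⟨hCs, hCc⟩ := mem_powersetCard.mp hC
    obtain ⟨-, -, -, -, -, -, -, -, -, -, -, hinter, hfwdA, hfwdB, hfwdF, -⟩ :=
      bwd_props q hn2 hii hin hCs hCc hA' hB' hF' hdisj hcA' hcB' h1A' h2A' h1B' h2B' himg'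
    simp only [hinter, hfwdA, hfwdB, hfwdF]
  · -- values
    rintro ⟨⟨A, B⟩, F⟩ hx
    obtain ⟨hxs, hxP⟩ := Finset.mem_filter.mp hx
    obtain ⟨⟨htriv, hcA, hcB, h1A, h2A, h1B, h2B, himg⟩, hcap⟩ := hxP
    have hA := Finset.mem_powerset.mp (mem_sigma.mp (mem_sigma.mp hxs).1).1
    have hB := Finset.mem_powerset.mp (mem_sigma.mp (mem_sigma.mp hxs).1).2
    have hFlk := (mem_sigma.mp hxs).2
    obtain ⟨-, -, hCs, hsubA', hsubB', hlink, hdisj, hcardA', hcardB',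
      h1A', h2A', h1B', h2B', himg', hbwdA, hbwdB, hbwdF⟩ :=
      fwd_props hn2 hA hB hFlk htriv hcA hcB h1A h2A h1B h2B himg hcap
    obtain ⟨-, -, -, -, -, -, -, -, -, -, -, -, -, -, -, hw⟩ :=
      bwd_props q hn2 hii hin hCs hcap hsubA' hsubB' hlink hdisj hcardA' hcardB'
        h1A' h2A' h1B' h2B' himg'
    rw [hbwdA, hbwdB, hbwdF] at hw
    dsimp only at hw ⊢
    exact hw

lemma ite_card_split {P : Prop} [Decidable P] {c s : ℕ} (w : ℝ) (h : P → c ≤ s) :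
    (if P then w else 0) = ∑ j ∈ Finset.range (s + 1), if P ∧ c = j then w else 0 := by
  by_cases hP : P
  · rw [if_pos hP]
    have he : ∀ j ∈ Finset.range (s + 1),
        (if P ∧ c = j then w else 0) = if c = j then w else 0 := fun j _ => by
      by_cases h' : c = j
      · rw [if_pos ⟨hP, h'⟩, if_pos h']
      · rw [if_neg (fun hh => h' hh.2), if_neg h']
    rw [Finset.sum_congr rfl he, Finset.sum_ite_eq (Finset.range (s + 1)) c fun _ => w,
      if_pos (Finset.mem_range.mpr (by have := h hP; omega))]
  · rw [if_neg hP]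
    symm
    exact Finset.sum_eq_zero fun j _ => if_neg (fun hh => hP hh.1)

lemma mlqSum_one_eq_zero (q : ℝ) (cond : Finset ℕ → Finset ℕ → (ℕ → ℕ) → Prop)
    (hc : ∀ A B F, cond A B F → 2 ∈ B) : mlqSum q 1 cond = 0 := by
  rw [mlqSum_eq]
  refine Finset.sum_eq_zero fun A hA => Finset.sum_eq_zero fun B hB =>
    Finset.sum_eq_zero fun F hF => ?_
  rw [if_neg]
  rintro ⟨-, hcond⟩
  have h2 := hc _ _ _ hcond
  have := Finset.mem_powerset.mp hB h2
  rw [mem_Icc] at this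
  omega

end

/-- Recursion `W^A_{s,t}(n) = Σ_{i=0}^{s} C(n-2, i) · τ^A_{s-i,t}(n-i)`. -/
theorem WA_recursion (q : ℝ) (hq0 : 0 ≤ q) (hq1 : q < 1)
    (s t n : ℕ) (hn : s + t < n) :
    WA q s t n =
      ∑ i ∈ Finset.range (s + 1), ((n - 2).choose i : ℝ) * tauA q (s - i) t (n - i) := by
  classical
  rcases Nat.lt_or_ge n 2 with hn | hn2
  · -- n = 1
    have hn1 : n = 1 := by omega
    have hs : s = 0 := by omega
    have ht : t = 0 := by omega
    subst hn1; subst hs; subst ht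
    have hWA : WA q 0 0 1 = 0 := by
      rw [WA]
      exact mlqSum_one_eq_zero q _ (fun A B F h => h.2.2.2.2.2.1)
    have htau : tauA q 0 0 1 = 0 := by
      rw [tauA]
      exact mlqSum_one_eq_zero q _ (fun A B F h => h.2.2.2.2.2.2.1)
    simp [hWA, htau]
  · have e1 : WA q s t n = ∑ x ∈ ((Finset.Icc 1 n).powerset.sigma
        fun _ => (Finset.Icc 1 n).powerset).sigma (fun p => linkings p.1 p.2),
        if (∀ a ∈ x.1.1 ∩ x.1.2, x.2 a = a) ∧
            (x.1.1.card = s ∧ x.1.2.card = s + t ∧ 1 ∉ x.1.1 ∧ 2 ∉ x.1.1 ∧ 1 ∉ x.1.2 ∧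
              2 ∈ x.1.2 ∧ 2 ∉ x.1.1.image x.2)
        then mlqW q n x.1.1 x.1.2 x.2 else 0 := by
      rw [WA, mlqSum_eq, Finset.sum_sigma, Finset.sum_sigma]
      refine Finset.sum_congr rfl fun A _ => Finset.sum_congr rfl fun B _ =>
        Finset.sum_congr rfl fun F _ => ite_congr rfl (fun _ => rfl) (fun _ => rfl)
    rw [e1]
    have e2 : ∀ x ∈ ((Finset.Icc 1 n).powerset.sigma
        fun _ => (Finset.Icc 1 n).powerset).sigma (fun p => linkings p.1 p.2),
        (if (∀ a ∈ x.1.1 ∩ x.1.2, x.2 a = a) ∧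
            (x.1.1.card = s ∧ x.1.2.card = s + t ∧ 1 ∉ x.1.1 ∧ 2 ∉ x.1.1 ∧ 1 ∉ x.1.2 ∧
              2 ∈ x.1.2 ∧ 2 ∉ x.1.1.image x.2)
         then mlqW q n x.1.1 x.1.2 x.2 else 0)
        = ∑ j ∈ Finset.range (s + 1),
            if ((∀ a ∈ x.1.1 ∩ x.1.2, x.2 a = a) ∧
              (x.1.1.card = s ∧ x.1.2.card = s + t ∧ 1 ∉ x.1.1 ∧ 2 ∉ x.1.1 ∧ 1 ∉ x.1.2 ∧
                2 ∈ x.1.2 ∧ 2 ∉ x.1.1.image x.2)) ∧ (x.1.1 ∩ x.1.2).card = j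
            then mlqW q n x.1.1 x.1.2 x.2 else 0 := by
      intro x _
      refine ite_card_split _ fun hP => ?_
      calc (x.1.1 ∩ x.1.2).card ≤ x.1.1.card := Finset.card_le_card Finset.inter_subset_left
        _ = s := hP.2.1
    rw [Finset.sum_congr rfl e2, Finset.sum_comm]
    refine Finset.sum_congr rfl fun j hj => ?_
    rw [Finset.mem_range] at hj
    by_cases hjn : j + 2 ≤ n
    · exact Si_eq q s t n j hn2 (by omega) hjn
    · rw [Nat.choose_eq_zero_of_lt (by omega), Nat.cast_zero, zero_mul]
      refine Finset.sum_eq_zero fun x hx => ?_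
      rw [if_neg]
      rintro ⟨⟨-, -, -, h1A, h2A, -, -, -⟩, hcap⟩
      have hA : x.1.1 ⊆ Finset.Icc 1 n :=
        Finset.mem_powerset.mp (Finset.mem_sigma.mp (Finset.mem_sigma.mp hx).1).1
      have hsub : x.1.1 ∩ x.1.2 ⊆ Finset.Icc 1 n \ {1, 2} := by
        intro z hz
        rw [Finset.mem_sdiff]
        refine ⟨hA (Finset.mem_inter.mp hz).1, ?_⟩
        simp only [Finset.mem_insert, Finset.mem_singleton]
        rintro (rfl | rfl)
        · exact h1A (Finset.mem_inter.mp hz).1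
        · exact h2A (Finset.mem_inter.mp hz).1
      have h12 : ({1, 2} : Finset ℕ) ⊆ Finset.Icc 1 n := by
        intro z hz; simp only [Finset.mem_insert, Finset.mem_singleton] at hz
        rcases hz with rfl | rfl <;> rw [Finset.mem_Icc] <;> omega
      have hle := Finset.card_le_card hsub
      rw [hcap, Finset.card_sdiff_of_subset h12, Nat.card_Icc] at hle
      have h2c : ({1, 2} : Finset ℕ).card = 2 := by decide
      omega
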